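/- Let T be a tree with leaf set leaves(T), f : V → ℝ>0 an importance function, L ⊆ leaves(T), and τ ≥ 0. Define T^f_{L,τ} as the flow graph where the source s connects to each leaf v with capacity τ·f(v) and the sink t receives infinite-capacity edges from each vertex of L. Then Ψ̂^f_T(L) ≥ τ if and only if the minimum s-t cut in T^f_{L,τ} equals τ·Σ_{v∈leaves(T)} f(v). -/

import Mathlib

open Finset
open scoped ENNReal

/-- Weight of the (directed) cut leaving `S` in a graph with capacities `c`. -/
noncomputable def treeCutE {V : Type*} [Fintype V] [DecidableEq V] (c : V → V → ℝ≥0∞)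
    (S : Finset V) : ℝ≥0∞ :=
  ∑ u ∈ S, ∑ v ∈ Sᶜ, c u v

/-- `λ(A,B)`: minimum weight of a cut separating `A` from `B`. -/
noncomputable def lamE {V : Type*} [Fintype V] [DecidableEq V] (c : V → V → ℝ≥0∞)
    (A B : Finset V) : ℝ≥0∞ :=
  ⨅ S ∈ {S : Finset V | A ⊆ S ∧ Disjoint S B}, treeCutE c S

/-- `Ψ̂_T(L)` for the tree with edge weights `w` and leaf set `leaves`. -/
noncomputable def PsiHatE {V : Type*} [Fintype V] [DecidableEq V] (w : V → V → ℝ≥0∞)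
    (leaves L : Finset V) : ℝ≥0∞ :=
  ⨅ S ∈ {S : Finset V | S.Nonempty ∧ S ⊆ leaves \ L},
    lamE w S (leaves \ S) / (S.card : ℝ≥0∞)

/-- Capacities of the flow graph `T_{L,τ}`: all tree edges, an edge of capacity `τ` between
the source `s = Sum.inr true` and every leaf, and an edge of capacity `∞` between every
vertex of `L` and the sink `t = Sum.inr false`. -/
noncomputable def flowW {V : Type*} [DecidableEq V] (w : V → V → ℝ≥0∞)
    (leaves L : Finset V) (τ : ℝ≥0∞) : (V ⊕ Bool) → (V ⊕ Bool) → ℝ≥0∞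
  | Sum.inl u, Sum.inl v => w u v
  | Sum.inr true, Sum.inl v => if v ∈ leaves then τ else 0
  | Sum.inl v, Sum.inr true => if v ∈ leaves then τ else 0
  | Sum.inl v, Sum.inr false => if v ∈ L then ⊤ else 0
  | Sum.inr false, Sum.inl v => if v ∈ L then ⊤ else 0
  | Sum.inr _, Sum.inr _ => 0

/-- The value of the minimum `s`-`t` cut (= maximum `s`-`t` flow) in `T_{L,τ}`. -/
noncomputable def minSTcut {V : Type*} [Fintype V] [DecidableEq V] (w : V → V → ℝ≥0∞)
    (leaves L : Finset V) (τ : ℝ≥0∞) : ℝ≥0∞ :=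
  lamE (flowW w leaves L τ) {Sum.inr true} {Sum.inr false}

/-- Importance-weighted objective `Ψ̂^f_T(L)`. -/
noncomputable def PsiHatEf {V : Type*} [Fintype V] [DecidableEq V] (w : V → V → ℝ≥0∞)
    (f : V → ℝ≥0∞) (leaves L : Finset V) : ℝ≥0∞ :=
  ⨅ S ∈ {S : Finset V | S.Nonempty ∧ S ⊆ leaves \ L},
    lamE w S (leaves \ S) / ∑ v ∈ S, f v

/-- Capacities of the importance-weighted flow graph `T^f_{L,τ}`: all tree edges, an edge of
capacity `τ·f(v)` between the source `s = Sum.inr true` and every leaf `v`, and an edge of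
capacity `∞` between every vertex of `L` and the sink `t = Sum.inr false`. -/
noncomputable def flowWf {V : Type*} [DecidableEq V] (w : V → V → ℝ≥0∞) (f : V → ℝ≥0∞)
    (leaves L : Finset V) (τ : ℝ≥0∞) : (V ⊕ Bool) → (V ⊕ Bool) → ℝ≥0∞
  | Sum.inl u, Sum.inl v => w u v
  | Sum.inr true, Sum.inl v => if v ∈ leaves then τ * f v else 0
  | Sum.inl v, Sum.inr true => if v ∈ leaves then τ * f v else 0
  | Sum.inl v, Sum.inr false => if v ∈ L then ⊤ else 0
  | Sum.inr false, Sum.inl v => if v ∈ L then ⊤ else 0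
  | Sum.inr _, Sum.inr _ => 0

/-- The minimum `s`-`t` cut value in `T^f_{L,τ}`. -/
noncomputable def minSTcutF {V : Type*} [Fintype V] [DecidableEq V] (w : V → V → ℝ≥0∞)
    (f : V → ℝ≥0∞) (leaves L : Finset V) (τ : ℝ≥0∞) : ℝ≥0∞ :=
  lamE (flowWf w f leaves L τ) {Sum.inr true} {Sum.inr false}

/-- Key computation: the value of the cut `{s} ∪ A` in the flow graph, for `A` avoiding `L`. -/
lemma flow_cut_eq {V : Type*} [Fintype V] [DecidableEq V] (w : V → V → ℝ≥0∞) (f : V → ℝ≥0∞)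
    (leaves L : Finset V) (τ : ℝ≥0∞) (A : Finset V) (hAL : Disjoint A L) :
    treeCutE (flowWf w f leaves L τ) (insert (Sum.inr true) (A.image Sum.inl))
      = treeCutE w A + τ * ∑ v ∈ leaves \ A, f v := by
  classical
  have hinj : Function.Injective (Sum.inl : V → V ⊕ Bool) := Sum.inl_injective
  have hcompl : ((insert (Sum.inr true) (A.image Sum.inl) : Finset (V ⊕ Bool)))ᶜ
      = insert (Sum.inr false) (Aᶜ.image Sum.inl) := by
    ext x
    rcases x with v | b
    · simp
    · cases b <;> simp
  rw [treeCutE, hcompl, Finset.sum_insert (by simp)]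
  have hsA : Aᶜ ∩ leaves = leaves \ A := by ext x; simp [and_comm]
  have h1 : ∑ v ∈ insert (Sum.inr false) (Aᶜ.image Sum.inl),
      flowWf w f leaves L τ (Sum.inr true) v = τ * ∑ v ∈ leaves \ A, f v := by
    rw [Finset.sum_insert (by simp), Finset.sum_image (fun a _ b _ h => hinj h)]
    simp only [flowWf]
    rw [Finset.sum_ite_mem, hsA, Finset.mul_sum]
    simp
  have h2 : ∑ u ∈ A.image Sum.inl, ∑ v ∈ insert (Sum.inr false) (Aᶜ.image Sum.inl),
      flowWf w f leaves L τ u v = treeCutE w A := by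
    rw [Finset.sum_image (fun a _ b _ h => hinj h), treeCutE]
    refine Finset.sum_congr rfl fun a ha => ?_
    rw [Finset.sum_insert (by simp), Finset.sum_image (fun a _ b _ h => hinj h)]
    have haL : a ∉ L := fun h => (Finset.disjoint_left.mp hAL ha) h
    simp [flowWf, haL]
  rw [h1, h2, add_comm]

/-- `Ψ̂^f_T(L) ≥ τ` if and only if the minimum `s`-`t` cut in `T^f_{L,τ}`
equals `τ·Σ_{v ∈ leaves(T)} f(v)`. -/
theorem stmt15 {V : Type*} [Fintype V] [DecidableEq V]
    (T : SimpleGraph V) [DecidableRel T.Adj] (hT : T.IsTree)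
    (w : V → V → ℝ≥0∞) (hsymm : ∀ u v, w u v = w v u)
    (hsupp : ∀ u v, w u v ≠ 0 → T.Adj u v) (hfin : ∀ u v, w u v ≠ ⊤)
    (leaves : Finset V) (hleaves : leaves = Finset.univ.filter (fun x => T.degree x = 1))
    (f : V → ℝ≥0∞) (hf : ∀ v, 0 < f v) (hf' : ∀ v, f v ≠ ⊤)
    (L : Finset V) (hL : L ⊆ leaves) (τ : ℝ≥0∞) (hτ : τ ≠ ⊤) :
    τ ≤ PsiHatEf w f leaves L ↔
      minSTcutF w f leaves L τ = τ * ∑ v ∈ leaves, f v := by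
  classical
  set c := flowWf w f leaves L τ with hc
  have hfin_sum : ∀ (s : Finset V), (τ * ∑ v ∈ s, f v) ≠ ⊤ := fun s =>
    ENNReal.mul_ne_top hτ (by
      rw [← lt_top_iff_ne_top]
      exact ENNReal.sum_lt_top.mpr fun v _ => lt_top_iff_ne_top.mpr (hf' v))
  -- the cut {s} shows minSTcutF ≤ τ * Σ
  have hsingle : treeCutE c {Sum.inr true} = τ * ∑ v ∈ leaves, f v := by
    have h := flow_cut_eq w f leaves L τ ∅ (Finset.disjoint_left.mpr (by simp))
    simpa [treeCutE] using h
  have hupper : minSTcutF w f leaves L τ ≤ τ * ∑ v ∈ leaves, f v := by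
    rw [minSTcutF, ← hc, ← hsingle]
    exact iInf₂_le {Sum.inr true} ⟨le_rfl, by simp⟩
  -- reformulate the left side
  have key1 : τ ≤ PsiHatEf w f leaves L ↔ ∀ S : Finset V, S.Nonempty → S ⊆ leaves \ L →
      τ * ∑ v ∈ S, f v ≤ lamE w S (leaves \ S) := by
    have hb0 : ∀ S : Finset V, S.Nonempty → (∑ v ∈ S, f v) ≠ 0 := fun S hS h0 =>
      (hf hS.choose).ne' (Finset.sum_eq_zero_iff.mp h0 _ hS.choose_spec)
    have hbT : ∀ S : Finset V, (∑ v ∈ S, f v) ≠ ⊤ := fun S =>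
      (ENNReal.sum_lt_top.mpr fun v _ => (hf' v).lt_top).ne
    rw [PsiHatEf, le_iInf₂_iff]
    constructor
    · intro h S h1 h2
      have := h S ⟨h1, h2⟩
      rwa [ENNReal.le_div_iff_mul_le (Or.inl (hb0 S h1)) (Or.inl (hbT S))] at this
    · intro h S hS
      rw [ENNReal.le_div_iff_mul_le (Or.inl (hb0 S hS.1)) (Or.inl (hbT S))]
      exact h S hS.1 hS.2
  -- reformulate the right side
  have key2 : minSTcutF w f leaves L τ = τ * ∑ v ∈ leaves, f v ↔
      ∀ C : Finset (V ⊕ Bool), {Sum.inr true} ⊆ C → Disjoint C {Sum.inr false} →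
        τ * ∑ v ∈ leaves, f v ≤ treeCutE c C := by
    constructor
    · intro h C h1 h2
      calc τ * ∑ v ∈ leaves, f v = minSTcutF w f leaves L τ := h.symm
        _ ≤ treeCutE c C := iInf₂_le C ⟨h1, h2⟩
    · intro h
      exact le_antisymm hupper (le_iInf₂ fun C hC => h C hC.1 hC.2)
  rw [key1, key2]
  constructor
  · -- forward direction
    intro H C h1 h2
    set A : Finset V := C.preimage Sum.inl
      (Set.injOn_of_injective Sum.inl_injective) with hA
    have hmemA : ∀ v : V, v ∈ A ↔ Sum.inl v ∈ C := fun v => Finset.mem_preimage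
    by_cases hAL : Disjoint A L
    · have hf5 : Sum.inr false ∉ C := fun hm =>
        (Finset.disjoint_left.mp h2 hm) (by simp)
      have hCeq : C = insert (Sum.inr true) (A.image Sum.inl) := by
        ext x
        rcases x with v | b
        · simp [← hmemA v]
        · cases b
          · simp [hf5]
          · simpa using h1 (by simp)
      rw [hCeq, hc, flow_cut_eq w f leaves L τ A hAL]
      rw [← Finset.sum_inter_add_sum_sdiff leaves A f, mul_add]
      refine add_le_add ?_ le_rfl
      set S := leaves ∩ A with hS
      rcases S.eq_empty_or_nonempty with hE | hne
      · simp [hE]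
      · have hSsub : S ⊆ leaves \ L := by
          intro x hx
          rw [hS, Finset.mem_inter] at hx
          exact Finset.mem_sdiff.mpr ⟨hx.1, fun hxL => (Finset.disjoint_left.mp hAL hx.2) hxL⟩
        refine le_trans (H S hne hSsub) ?_
        refine iInf₂_le A ⟨(by rw [hS]; exact Finset.inter_subset_right), ?_⟩
        rw [Finset.disjoint_left]
        intro x hxA hxd
        rw [Finset.mem_sdiff] at hxd
        exact hxd.2 (by rw [hS, Finset.mem_inter]; exact ⟨hxd.1, hxA⟩)
    · -- cut contains a vertex of L: value is ⊤
      rw [Finset.not_disjoint_iff] at hAL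
      obtain ⟨v, hvA, hvL⟩ := hAL
      have hvC : Sum.inl v ∈ C := (hmemA v).mp hvA
      have hfC : Sum.inr false ∈ Cᶜ := by
        rw [Finset.mem_compl]
        exact fun hm => (Finset.disjoint_left.mp h2 hm) (by simp)
      have htop : (⊤ : ℝ≥0∞) ≤ treeCutE c C := by
        calc (⊤ : ℝ≥0∞) = c (Sum.inl v) (Sum.inr false) := by
              simp [hc, flowWf, hvL]
          _ ≤ ∑ y ∈ Cᶜ, c (Sum.inl v) y :=
              Finset.single_le_sum (fun _ _ => zero_le) hfC
          _ ≤ treeCutE c C :=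
              Finset.single_le_sum (f := fun u => ∑ y ∈ Cᶜ, c u y)
                (fun _ _ => zero_le) hvC
      exact le_trans le_top htop
  · -- backward direction
    intro H S hSne hSsub
    refine le_iInf₂ fun A hA => ?_
    obtain ⟨hSA, hAd⟩ := hA
    have hAL : Disjoint A L := by
      rw [Finset.disjoint_left]
      intro x hxA hxL
      have hxleaves : x ∈ leaves := hL hxL
      have hxS : x ∉ S := fun hxS => (Finset.mem_sdiff.mp (hSsub hxS)).2 hxL
      exact (Finset.disjoint_left.mp hAd hxA) (Finset.mem_sdiff.mpr ⟨hxleaves, hxS⟩)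
    have hcut := H (insert (Sum.inr true) (A.image Sum.inl)) (by simp)
      (by rw [Finset.disjoint_right]; simp)
    rw [hc, flow_cut_eq w f leaves L τ A hAL] at hcut
    rw [← Finset.sum_inter_add_sum_sdiff leaves A f, mul_add] at hcut
    have hcancel : τ * ∑ v ∈ leaves ∩ A, f v ≤ treeCutE w A :=
      (WithTop.add_le_add_iff_right (hfin_sum (leaves \ A))).mp hcut
    refine le_trans ?_ hcancel
    refine mul_le_mul_right (Finset.sum_le_sum_of_subset ?_) τ
    intro x hxS
    exact Finset.mem_inter.mpr ⟨(Finset.mem_sdiff.mp (hSsub hxS)).1, hSA hxS⟩
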